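/- Let φ be an ordering of G and let u at position i and v at position i+1 be consecutive vertices with rd_φ(u) ≥ rd_φ(v). If u and v are non-adjacent, then swapping them does not decrease the cost: μ_G(φ*) ≥ μ_G(φ), where φ* is φ with u and v swapped. -/

import Mathlib

open Finset

variable {V : Type*} [Fintype V] [DecidableEq V]

/-- MSVC cost of an ordering `φ` (positions are `(φ v : ℕ) + 1`, i.e. in `{1,…,n}`). -/
def msvcCost {n : ℕ} (G : SimpleGraph V) [DecidableRel G.Adj] (φ : V ≃ Fin n) : ℕ :=
  ∑ e ∈ G.edgeFinset,
    Sym2.lift ⟨fun u v => min ((φ u : ℕ) + 1) ((φ v : ℕ) + 1), fun _ _ => min_comm _ _⟩ e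

/-- Right degree of `v` in the ordering `φ`. -/
def rightDeg {n : ℕ} (G : SimpleGraph V) [DecidableRel G.Adj] (φ : V ≃ Fin n) (v : V) : ℕ :=
  ((G.neighborFinset v).filter fun u => φ v < φ u).card

/-- Auxiliary: symmetric indicator that an edge leaves `u` to the right. -/
def indFun {n : ℕ} (φ : V ≃ Fin n) (u : V) : Sym2 V → ℕ :=
  Sym2.lift ⟨fun a b => (if a = u ∧ φ u < φ b then 1 else 0) +
    (if b = u ∧ φ u < φ a then 1 else 0), fun _ _ => add_comm _ _⟩

lemma sum_indFun {n : ℕ} (G : SimpleGraph V) [DecidableRel G.Adj] (φ : V ≃ Fin n) (u : V) :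
    ∑ e ∈ G.edgeFinset, indFun φ u e = rightDeg G φ u := by
  have himg : ((G.neighborFinset u).image fun w => s(u, w)) ⊆ G.edgeFinset := by
    intro e he
    simp only [Finset.mem_image, SimpleGraph.mem_neighborFinset] at he
    obtain ⟨w, hw, rfl⟩ := he
    rwa [SimpleGraph.mem_edgeFinset, SimpleGraph.mem_edgeSet]
  rw [← Finset.sum_subset himg]
  · rw [Finset.sum_image (fun x _ y _ h => Sym2.congr_right.mp h)]
    rw [rightDeg, Finset.card_filter]
    refine Finset.sum_congr rfl fun w hw => ?_
    have hwu : w ≠ u := by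
      intro h; subst h
      exact (G.loopless.irrefl w) (by simpa using hw)
    simp [indFun, hwu]
  · intro e he hni
    induction e using Sym2.ind with
    | _ a b =>
      have hadj : G.Adj a b := by simpa using he
      have hA : ¬(a = u ∧ φ u < φ b) := by
        rintro ⟨rfl, -⟩
        exact hni (Finset.mem_image.mpr ⟨b, by simpa using hadj, rfl⟩)
      have hB : ¬(b = u ∧ φ u < φ a) := by
        rintro ⟨rfl, -⟩
        exact hni (Finset.mem_image.mpr ⟨a, by simpa using hadj.symm, Sym2.eq_swap.symm⟩)
      simp only [indFun, Sym2.lift_mk, if_neg hA, if_neg hB]; rfl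

theorem stmt12 {n : ℕ} (G : SimpleGraph V) [DecidableRel G.Adj] (φ : V ≃ Fin n)
    (u v : V) (hne : u ≠ v) (hnadj : ¬ G.Adj u v) (hconsec : (φ v : ℕ) = (φ u : ℕ) + 1)
    (hrd : rightDeg G φ v ≤ rightDeg G φ u) :
    msvcCost G φ ≤ msvcCost G ((Equiv.swap u v).trans φ) := by
  classical
  set ψ := (Equiv.swap u v).trans φ with hψ
  have heq : ∀ x y : V, ((φ x : ℕ) = (φ y : ℕ)) ↔ x = y := fun x y =>
    ⟨fun h => φ.injective (Fin.val_injective h), fun h => by rw [h]⟩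
  have hval : ∀ w : V, (ψ w : ℕ) =
      if w = u then (φ v : ℕ) else if w = v then (φ u : ℕ) else (φ w : ℕ) := by
    intro w
    simp only [hψ, Equiv.trans_apply, Equiv.swap_apply_def]
    split_ifs <;> rfl
  have key : ∀ e ∈ G.edgeFinset,
      Sym2.lift ⟨fun a b => min ((ψ a : ℕ) + 1) ((ψ b : ℕ) + 1),
        fun _ _ => min_comm _ _⟩ e + indFun φ v e
      = Sym2.lift ⟨fun a b => min ((φ a : ℕ) + 1) ((φ b : ℕ) + 1),
        fun _ _ => min_comm _ _⟩ e + indFun φ u e := by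
    intro e he
    induction e using Sym2.ind with
    | _ a b =>
      have hadj : G.Adj a b := by simpa using he
      have h1 : ¬((φ a : ℕ) = (φ u : ℕ) ∧ (φ b : ℕ) = (φ v : ℕ)) := by
        rintro ⟨ha, hb⟩
        exact hnadj (by rwa [(heq a u).mp ha, (heq b v).mp hb] at hadj)
      have h2 : ¬((φ a : ℕ) = (φ v : ℕ) ∧ (φ b : ℕ) = (φ u : ℕ)) := by
        rintro ⟨ha, hb⟩
        rw [(heq a v).mp ha, (heq b u).mp hb] at hadj
        exact hnadj hadj.symm
      have h3 : (φ a : ℕ) ≠ (φ b : ℕ) := fun h => hadj.ne ((heq a b).mp h)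
      simp only [indFun, Sym2.lift_mk, Fin.lt_def]
      rw [hval a, hval b]
      simp only [← heq]
      split_ifs <;> simp only [Nat.min_def] <;> (try split_ifs) <;> omega
  have hsum := Finset.sum_congr rfl key
  rw [Finset.sum_add_distrib, Finset.sum_add_distrib, sum_indFun, sum_indFun] at hsum
  have hfin : msvcCost G ψ + rightDeg G φ v = msvcCost G φ + rightDeg G φ u := hsum
  omega
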